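/- Let F be a field and let A ∈ F^{n×n} be invertible with A = L·U·P, where L ∈ F^{n×n} is invertible lower triangular, U ∈ F^{n×n} is invertible upper triangular, and P is an n×n permutation matrix. Then the rank profile matrix of A equals P if and only if P^T·U·P is upper triangular. -/

import Mathlib

open Matrix

variable {F : Type*} [Field F]

/-- `P` is a permutation matrix. -/
def IsPermMatrix {k : ℕ} (P : Matrix (Fin k) (Fin k) F) : Prop :=
  ∃ σ : Equiv.Perm (Fin k), P = σ.permMatrix F

open Classical in
/-- `R` is the rank profile matrix of `A`: a `{0,1}`-matrix with exactly `rank A`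
nonzero entries, no two of which share a row or a column, all of whose leading
submatrices have the same rank as the corresponding leading submatrices of `A`. -/
def IsRankProfileMatrix {m n : ℕ} (A R : Matrix (Fin m) (Fin n) F) : Prop :=
  (∀ i j, R i j = 0 ∨ R i j = 1) ∧
  (Finset.univ.filter fun p : Fin m × Fin n => R p.1 p.2 ≠ 0).card = A.rank ∧
  (∀ i j i' j', R i j ≠ 0 → R i' j' ≠ 0 → (i = i' ↔ j = j')) ∧
  ∀ (i j : ℕ) (hi : i ≤ m) (hj : j ≤ n),
    (R.submatrix (Fin.castLE hi) (Fin.castLE hj)).rank =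
      (A.submatrix (Fin.castLE hi) (Fin.castLE hj)).rank

lemma myRank_submatrix_le {m n l o : Type*} [Fintype m] [Fintype n] [Fintype l] [Fintype o]
    [DecidableEq m] [DecidableEq n] (M : Matrix m n F) (r : l → m) (c : o → n) :
    (M.submatrix r c).rank ≤ M.rank := by
  have h1 : (1 : Matrix m m F).submatrix r id * M = M.submatrix r id := by
    ext a b
    simp [Matrix.mul_apply, Matrix.one_apply]
  have h2 : M.submatrix r id * (1 : Matrix n n F).submatrix id c = M.submatrix r c := by
    ext a b
    simp [Matrix.mul_apply, Matrix.one_apply]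
  calc (M.submatrix r c).rank
      = ((1 : Matrix m m F).submatrix r id * M * (1 : Matrix n n F).submatrix id c).rank := by
        rw [h1, h2]
    _ ≤ ((1 : Matrix m m F).submatrix r id * M).rank := Matrix.rank_mul_le_left _ _
    _ ≤ M.rank := Matrix.rank_mul_le_right _ _

lemma myRank_le_of_rows {m n : Type*} [Fintype m] [Fintype n] [DecidableEq m]
    (M : Matrix m n F) (t : Finset m) (h : ∀ a, a ∉ t → ∀ b, M a b = 0) :
    M.rank ≤ t.card := by
  classical
  rw [Matrix.rank_eq_finrank_span_cols]
  have hsub : Set.range Mᵀ ⊆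
      ↑(Submodule.span F ((t.image fun a => (Pi.single a 1 : m → F)) : Set (m → F))) := by
    rintro _ ⟨c, rfl⟩
    have hcol : Mᵀ c = ∑ a ∈ t, M a c • (Pi.single a 1 : m → F) := by
      funext r
      rw [Finset.sum_apply]
      have : ∀ a ∈ t, (M a c • (Pi.single a 1 : m → F)) r = if a = r then M a c else 0 := by
        intro a _
        simp [Pi.single_apply, eq_comm]
      rw [Finset.sum_congr rfl this, Finset.sum_ite_eq' t r (fun a => M a c)]
      by_cases hr : r ∈ t
      · simp [hr]
      · simp [hr, h r hr c]
    rw [hcol]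
    refine Submodule.sum_mem _ fun a ha => Submodule.smul_mem _ _ (Submodule.subset_span ?_)
    simp only [Finset.coe_image, Set.mem_image, Finset.mem_coe]
    exact ⟨a, ha, rfl⟩
  calc Module.finrank F (Submodule.span F (Set.range Mᵀ))
      ≤ Module.finrank F (Submodule.span F
          ((t.image fun a => (Pi.single a 1 : m → F)) : Set (m → F))) :=
        Submodule.finrank_mono (Submodule.span_le.mpr hsub)
    _ ≤ (t.image fun a => (Pi.single a 1 : m → F)).card := finrank_span_finset_le_card _
    _ ≤ t.card := Finset.card_image_le

lemma myPermMatrix_apply {n : ℕ} (σ : Equiv.Perm (Fin n)) (a b : Fin n) :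
    (σ.permMatrix F) a b = if σ a = b then 1 else 0 := by
  simp [Equiv.Perm.permMatrix, PEquiv.toMatrix_apply, Equiv.toPEquiv_apply, eq_comm]

lemma myMulPerm {n : ℕ} (σ : Equiv.Perm (Fin n)) (M : Matrix (Fin n) (Fin n) F) :
    M * σ.permMatrix F = M.submatrix id σ.symm :=
  PEquiv.mul_toMatrix_toPEquiv M σ

lemma myPtUP {n : ℕ} (σ : Equiv.Perm (Fin n)) (U : Matrix (Fin n) (Fin n) F) (a b : Fin n) :
    ((σ.permMatrix F)ᵀ * U * σ.permMatrix F) a b = U (σ.symm a) (σ.symm b) := by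
  have h1 : (σ.permMatrix F)ᵀ = Equiv.Perm.permMatrix F σ⁻¹ := by
    show (σ.toPEquiv.toMatrix : Matrix (Fin n) (Fin n) F)ᵀ = (σ⁻¹).toPEquiv.toMatrix
    rw [← PEquiv.toMatrix_symm, ← Equiv.toPEquiv_symm]
    rfl
  rw [h1, myMulPerm ]
  show ((σ⁻¹).toPEquiv.toMatrix * U).submatrix id σ.symm a b = _
  rw [PEquiv.toMatrix_toPEquiv_mul]
  rfl

lemma myBlock_mul {n : ℕ} (L M : Matrix (Fin n) (Fin n) F)
    (hLtri : ∀ p q : Fin n, p < q → L p q = 0) {i j : ℕ} (hi : i ≤ n) (hj : j ≤ n) :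
    (L * M).submatrix (Fin.castLE hi) (Fin.castLE hj) =
      (L.submatrix (Fin.castLE hi) (Fin.castLE hi)) *
        (M.submatrix (Fin.castLE hi) (Fin.castLE hj)) := by
  ext a b
  rw [Matrix.submatrix_apply, Matrix.mul_apply, Matrix.mul_apply]
  have hzero : ∀ k ∈ (Finset.univ : Finset (Fin n)),
      k ∉ (Finset.univ.map (Fin.castLEEmb hi)) →
      L (Fin.castLE hi a) k * M k (Fin.castLE hj b) = 0 := by
    intro k _ hk
    have hik : i ≤ k.val := by
      by_contra hlt
      push_neg at hlt
      exact hk (Finset.mem_map.mpr ⟨⟨k.val, hlt⟩, Finset.mem_univ _, Fin.ext rfl⟩)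
    rw [hLtri _ _ (by simpa [Fin.lt_def] using lt_of_lt_of_le a.isLt hik), zero_mul]
  rw [← Finset.sum_subset (Finset.subset_univ _) hzero, Finset.sum_map]
  rfl

lemma myDiag_ne_zero {n : ℕ} (U : Matrix (Fin n) (Fin n) F)
    (hUtri : ∀ p q : Fin n, q < p → U p q = 0) (hU : IsUnit U) (c : Fin n) :
    U c c ≠ 0 := by
  have hdet : U.det = ∏ p, U p p := Matrix.det_of_upperTriangular (fun p q h => hUtri p q h)
  have := (Matrix.isUnit_iff_isUnit_det U).mp hU
  rw [hdet, isUnit_iff_ne_zero] at this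
  exact Finset.prod_ne_zero_iff.mp this c (Finset.mem_univ c)

lemma myRank_lower_mul {n : ℕ} (L M : Matrix (Fin n) (Fin n) F)
    (hLtri : ∀ p q : Fin n, p < q → L p q = 0) (hL : IsUnit L) {i j : ℕ}
    (hi : i ≤ n) (hj : j ≤ n) :
    ((L * M).submatrix (Fin.castLE hi) (Fin.castLE hj)).rank =
      (M.submatrix (Fin.castLE hi) (Fin.castLE hj)).rank := by
  rw [myBlock_mul L M hLtri hi hj]
  apply Matrix.rank_mul_eq_right_of_isUnit_det
  have hLdiag : ∀ c : Fin n, L c c ≠ 0 := by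
    intro c
    have hdet : L.det = ∏ p, L p p :=
      Matrix.det_of_lowerTriangular L (fun p q h => hLtri p q (OrderDual.toDual_lt_toDual.mp h))
    have := (Matrix.isUnit_iff_isUnit_det L).mp hL
    rw [hdet, isUnit_iff_ne_zero] at this
    exact Finset.prod_ne_zero_iff.mp this c (Finset.mem_univ c)
  have hbdet : (L.submatrix (Fin.castLE hi) (Fin.castLE hi)).det =
      ∏ p : Fin i, L (Fin.castLE hi p) (Fin.castLE hi p) :=
    Matrix.det_of_lowerTriangular _ (fun p q h => by
      have h2 : p < q := OrderDual.toDual_lt_toDual.mp h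
      exact hLtri _ _ (by rw [Fin.lt_def]; exact h2))
  rw [hbdet, isUnit_iff_ne_zero]
  exact Finset.prod_ne_zero_iff.mpr fun p _ => hLdiag _

lemma myRank_block_le {n : ℕ} (U : Matrix (Fin n) (Fin n) F) (σ : Equiv.Perm (Fin n))
    (hcond : ∀ x y : Fin n, σ y < σ x → U x y = 0) {i j : ℕ} (hi : i ≤ n) (hj : j ≤ n) :
    ((U * σ.permMatrix F).submatrix (Fin.castLE hi) (Fin.castLE hj)).rank ≤
      (Finset.univ.filter fun a : Fin i => (σ (Fin.castLE hi a)).val < j).card := by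
  apply myRank_le_of_rows
  intro a ha b
  simp only [Finset.mem_filter, Finset.mem_univ, true_and, not_lt] at ha
  rw [Matrix.submatrix_apply, myMulPerm, Matrix.submatrix_apply, id]
  apply hcond
  rw [Fin.lt_def, Equiv.apply_symm_apply]
  exact lt_of_lt_of_le b.isLt ha

lemma myK_le_rank_block {n : ℕ} (U : Matrix (Fin n) (Fin n) F) (σ : Equiv.Perm (Fin n))
    (hUtri : ∀ p q : Fin n, q < p → U p q = 0) {i j : ℕ} (hi : i ≤ n) (hj : j ≤ n) {k : ℕ}
    (row col : Fin k → Fin n)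
    (hrowi : ∀ m, (row m).val < i) (hcolj : ∀ m, (σ (col m)).val < j)
    (hlt : ∀ m m' : Fin k, m' < m → col m' < row m)
    (hdiag : ∀ m, U (row m) (col m) ≠ 0) :
    k ≤ ((U * σ.permMatrix F).submatrix (Fin.castLE hi) (Fin.castLE hj)).rank := by
  set N := (U * σ.permMatrix F).submatrix (Fin.castLE hi) (Fin.castLE hj) with hN
  set r : Fin k → Fin i := fun m => ⟨(row m).val, hrowi m⟩ with hr
  set c : Fin k → Fin j := fun m => ⟨(σ (col m)).val, hcolj m⟩ with hc
  have hent : ∀ m m', (N.submatrix r c) m m' = U (row m) (col m') := by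
    intro m m'
    rw [Matrix.submatrix_apply, hN, Matrix.submatrix_apply, myMulPerm,
      Matrix.submatrix_apply, id]
    have e1 : Fin.castLE hi (r m) = row m := Fin.ext rfl
    have e2 : σ.symm (Fin.castLE hj (c m')) = col m' := by
      have e3 : Fin.castLE hj (c m') = σ (col m') := Fin.ext rfl
      rw [e3, Equiv.symm_apply_apply]
    rw [e1, e2]
  have hunit : IsUnit (N.submatrix r c) := by
    rw [Matrix.isUnit_iff_isUnit_det]
    have hdet : (N.submatrix r c).det = ∏ m, U (row m) (col m) := by
      have htri : (N.submatrix r c).BlockTriangular id := by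
        intro m m' hmm
        rw [hent]
        exact hUtri _ _ (hlt m m' hmm)
      rw [Matrix.det_of_upperTriangular htri]
      exact Finset.prod_congr rfl (fun m _ => hent m m)
    rw [hdet, isUnit_iff_ne_zero]
    exact Finset.prod_ne_zero_iff.mpr fun m _ => hdiag m
  have := Matrix.rank_of_isUnit _ hunit
  calc k = (N.submatrix r c).rank := by rw [this, Fintype.card_fin]
    _ ≤ N.rank := myRank_submatrix_le N r c

lemma myEnum {n : ℕ} (σ : Equiv.Perm (Fin n)) {i j : ℕ} (hi : i ≤ n) (hj : j ≤ n) :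
    ∃ t : Fin (Finset.univ.filter fun a : Fin i => (σ (Fin.castLE hi a)).val < j).card → Fin i,
      (∀ m, (σ (Fin.castLE hi (t m))).val < j) ∧ StrictMono t := by
  refine ⟨fun m => ((Finset.orderIsoOfFin _ rfl) m : Fin i), fun m => ?_, fun a b h => ?_⟩
  · exact (Finset.mem_filter.mp ((Finset.orderIsoOfFin _ rfl) m).2).2
  · exact (Finset.orderIsoOfFin _ rfl).strictMono h

lemma myRank_eq_card {n : ℕ} (U : Matrix (Fin n) (Fin n) F) (σ : Equiv.Perm (Fin n))
    (hUtri : ∀ p q : Fin n, q < p → U p q = 0) (hdiag : ∀ c, U c c ≠ 0)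
    (hcond : ∀ x y : Fin n, σ y < σ x → U x y = 0) {i j : ℕ} (hi : i ≤ n) (hj : j ≤ n) :
    ((U * σ.permMatrix F).submatrix (Fin.castLE hi) (Fin.castLE hj)).rank =
      (Finset.univ.filter fun a : Fin i => (σ (Fin.castLE hi a)).val < j).card := by
  refine le_antisymm (myRank_block_le U σ hcond hi hj) ?_
  obtain ⟨t, ht_mem, ht_mono⟩ := myEnum σ hi hj
  exact myK_le_rank_block U σ hUtri hi hj
    (fun m => Fin.castLE hi (t m)) (fun m => Fin.castLE hi (t m))
    (fun m => (t m).isLt) ht_mem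
    (fun m m' h => by rw [Fin.lt_def]; exact ht_mono h)
    (fun m => hdiag _)

/-- for an invertible `A = L·U·P` with `L` invertible lower triangular,
`U` invertible upper triangular and `P` a permutation matrix, the rank profile matrix
of `A` equals `P` if and only if `Pᵀ·U·P` is upper triangular. -/
theorem rank_profile_matrix_eq_P_iff {n : ℕ}
    (A : Matrix (Fin n) (Fin n) F) (hA : IsUnit A)
    (L U P : Matrix (Fin n) (Fin n) F)
    (hLtri : ∀ i j : Fin n, i < j → L i j = 0) (hL : IsUnit L)
    (hUtri : ∀ i j : Fin n, j < i → U i j = 0) (hU : IsUnit U)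
    (hP : IsPermMatrix P) (hLUP : A = L * U * P) :
    IsRankProfileMatrix A P ↔ ∀ i j : Fin n, j < i → (Pᵀ * U * P) i j = 0 := by
  classical
  obtain ⟨σ, rfl⟩ := hP
  have hUdiag : ∀ c : Fin n, U c c ≠ 0 := myDiag_ne_zero U hUtri hU
  have hne0 : ∀ a b : Fin n, ((σ.permMatrix F) a b ≠ 0) ↔ σ a = b := by
    intro a b
    rw [myPermMatrix_apply]
    by_cases h : σ a = b <;> simp [h]
  have hiff : (∀ i j : Fin n, j < i → ((σ.permMatrix F)ᵀ * U * σ.permMatrix F) i j = 0) ↔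
      (∀ x y : Fin n, σ y < σ x → U x y = 0) := by
    constructor
    · intro h x y hxy
      have := h (σ x) (σ y) hxy
      rwa [myPtUP, Equiv.symm_apply_apply, Equiv.symm_apply_apply] at this
    · intro h a b hab
      rw [myPtUP]
      exact h _ _ (by rwa [Equiv.apply_symm_apply, Equiv.apply_symm_apply])
  rw [hiff]
  have hAblock : ∀ {i j : ℕ} (hi : i ≤ n) (hj : j ≤ n),
      (A.submatrix (Fin.castLE hi) (Fin.castLE hj)).rank =
        ((U * σ.permMatrix F).submatrix (Fin.castLE hi) (Fin.castLE hj)).rank := by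
    intro i j hi hj
    rw [hLUP, mul_assoc]
    exact myRank_lower_mul L (U * σ.permMatrix F) hLtri hL hi hj
  have h1tri : ∀ p q : Fin n, q < p → (1 : Matrix (Fin n) (Fin n) F) p q = 0 :=
    fun p q h => Matrix.one_apply_ne (ne_of_gt h)
  have h1cond : ∀ x y : Fin n, σ y < σ x → (1 : Matrix (Fin n) (Fin n) F) x y = 0 :=
    fun x y h => Matrix.one_apply_ne (fun e => absurd (e ▸ h) (lt_irrefl _))
  have h1diag : ∀ c : Fin n, (1 : Matrix (Fin n) (Fin n) F) c c ≠ 0 :=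
    fun c => by rw [Matrix.one_apply_eq]; exact one_ne_zero
  have hPrank : ∀ {i j : ℕ} (hi : i ≤ n) (hj : j ≤ n),
      ((σ.permMatrix F).submatrix (Fin.castLE hi) (Fin.castLE hj)).rank =
        (Finset.univ.filter fun a : Fin i => (σ (Fin.castLE hi a)).val < j).card := by
    intro i j hi hj
    rw [← one_mul (σ.permMatrix F)]
    exact myRank_eq_card 1 σ h1tri h1diag h1cond hi hj
  constructor
  · -- rank profile → triangularity
    intro hRP x y hxy
    by_contra hne
    have hxlty : x < y := by
      rcases lt_trichotomy x y with h | h | h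
      · exact h
      · exact absurd (h ▸ hxy) (lt_irrefl _)
      · exact absurd (hUtri x y h) hne
    have hi : x.val + 1 ≤ n := x.isLt
    have hj : (σ x).val ≤ n := le_of_lt (σ x).isLt
    set T := (Finset.univ.filter
      fun a : Fin (x.val + 1) => (σ (Fin.castLE hi a)).val < (σ x).val) with hT
    obtain ⟨t, ht_mem, ht_mono⟩ := myEnum σ hi hj
    set base : Fin T.card → Fin n := fun m => Fin.castLE hi (t m) with hbase
    have hbase_lt_x : ∀ m, base m < x := by
      intro m
      have h1 : (t m).val < x.val + 1 := (t m).isLt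
      have h2 : (σ (Fin.castLE hi (t m))).val < (σ x).val := ht_mem m
      rw [Fin.lt_def]
      rcases Nat.lt_succ_iff_lt_or_eq.mp h1 with h | h
      · exact h
      · exfalso
        have hx : Fin.castLE hi (t m) = x := Fin.ext h
        rw [hx] at h2
        exact lt_irrefl _ h2
    set row : Fin (T.card + 1) → Fin n := Fin.snoc base x with hrow
    set col : Fin (T.card + 1) → Fin n := Fin.snoc base y with hcol
    have hUPge : T.card + 1 ≤
        ((U * σ.permMatrix F).submatrix (Fin.castLE hi) (Fin.castLE hj)).rank := by
      refine myK_le_rank_block U σ hUtri hi hj row col ?_ ?_ ?_ ?_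
      · intro m
        refine Fin.lastCases ?_ ?_ m
        · rw [hrow, Fin.snoc_last]
          exact Nat.lt_succ_self _
        · intro m0
          rw [hrow, Fin.snoc_castSucc]
          exact Nat.lt_succ_of_lt (hbase_lt_x m0)
      · intro m
        refine Fin.lastCases ?_ ?_ m
        · rw [hcol, Fin.snoc_last]
          exact hxy
        · intro m0
          rw [hcol, Fin.snoc_castSucc]
          exact ht_mem m0
      · intro m m' hmm'
        by_cases hm : m = Fin.last T.card
        · subst hm
          have hm' : m' ≠ Fin.last T.card := ne_of_lt hmm'
          obtain ⟨m0', rfl⟩ := Fin.exists_castSucc_eq.mpr hm'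
          rw [hrow, hcol, Fin.snoc_last, Fin.snoc_castSucc]
          exact hbase_lt_x m0'
        · obtain ⟨m0, rfl⟩ := Fin.exists_castSucc_eq.mpr hm
          have hm' : m' ≠ Fin.last T.card := by
            intro e
            rw [e] at hmm'
            exact absurd (lt_trans hmm' (Fin.castSucc_lt_last m0)) (lt_irrefl _)
          obtain ⟨m0', rfl⟩ := Fin.exists_castSucc_eq.mpr hm'
          rw [hrow, hcol, Fin.snoc_castSucc, Fin.snoc_castSucc, hbase, Fin.lt_def]
          exact ht_mono (Fin.castSucc_lt_castSucc_iff.mp hmm')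
      · intro m
        refine Fin.lastCases ?_ ?_ m
        · rw [hrow, hcol, Fin.snoc_last, Fin.snoc_last]
          exact hne
        · intro m0
          rw [hrow, hcol, Fin.snoc_castSucc, Fin.snoc_castSucc]
          exact hUdiag _
    have h4 := hRP.2.2.2 (x.val + 1) (σ x).val hi hj
    have hPle := (hPrank hi hj).le
    rw [hAblock hi hj] at h4
    rw [h4] at hPle
    rw [← hT] at hPle
    omega
  · -- triangularity → rank profile
    intro hcond
    refine ⟨?_, ?_, ?_, ?_⟩
    · intro a b
      by_cases h : σ a = b
      · right; rw [myPermMatrix_apply, if_pos h]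
      · left; rw [myPermMatrix_apply, if_neg h]
    · have himg : (Finset.univ.filter fun p : Fin n × Fin n => (σ.permMatrix F) p.1 p.2 ≠ 0)
          = Finset.univ.image (fun a : Fin n => (a, σ a)) := by
        ext ⟨p1, p2⟩
        simp only [Finset.mem_filter, Finset.mem_univ, true_and, Finset.mem_image, hne0]
        constructor
        · intro h
          exact ⟨p1, by rw [h]⟩
        · rintro ⟨a, ha⟩
          rw [Prod.ext_iff] at ha
          obtain ⟨h1, h2⟩ := ha
          simp only at h1 h2
          rw [← h1]
          exact h2
      rw [himg, Finset.card_image_of_injective _ (fun a b h => congrArg Prod.fst h),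
        Finset.card_univ, Fintype.card_fin, Matrix.rank_of_isUnit A hA, Fintype.card_fin]
    · intro a b a' b' h h'
      have e : σ a = b := (hne0 a b).mp h
      have e' : σ a' = b' := (hne0 a' b').mp h'
      subst e; subst e'
      exact ⟨fun h => h ▸ rfl, fun h => σ.injective h⟩
    · intro i j hi hj
      rw [hPrank hi hj, hAblock hi hj]
      exact (myRank_eq_card U σ hUtri hUdiag hcond hi hj).symm
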